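/- First-order p = 2 expansion: with s2 = b1+b2-a1-a2-a3, Γ(a1+n)Γ(a2+n)Γ(a3+n)/(Γ(b1+n)Γ(b2+n)Γ(-s2+n)) = 1 + [(a1+s2)(a2+s2) - (b2-a3)(b1-a3)]/(1+s2-n) + O(n^{-2}) as n → ∞. -/

import Mathlib

set_option linter.unusedVariables false
set_option linter.constructorNameAsVariable false


open Filter Asymptotics Finset Topology

lemma myGamma_add_nat (a : ℝ) (ha : 0 < a) (n : ℕ) :
    Real.Gamma (a + n) = Real.Gamma a * ∏ j ∈ Finset.range n, (a + j) := by
  induction n with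
  | zero => simp
  | succ n ih =>
    have h1 : a + (n : ℝ) ≠ 0 := by positivity
    have h2 : a + ((n + 1 : ℕ) : ℝ) = (a + n) + 1 := by push_cast; ring
    rw [h2, Real.Gamma_add_one h1, ih, Finset.prod_range_succ]
    ring

lemma tendsto_ratio_pos {a : ℝ} (ha : 0 < a) :
    Tendsto (fun n : ℕ => Real.Gamma (a + n) / ((n.factorial : ℝ) * (n : ℝ) ^ (a - 1)))
      atTop (𝓝 1) := by
  have hGa : Real.Gamma a ≠ 0 := (Real.Gamma_pos_of_pos ha).ne'
  have hseq : ∀ n : ℕ, Real.GammaSeq a n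
      = (n : ℝ) ^ a * (n.factorial : ℝ) * Real.Gamma a / Real.Gamma (a + ((n + 1 : ℕ) : ℝ)) := by
    intro n
    have h1 := myGamma_add_nat a ha (n + 1)
    have h3 : ∏ j ∈ Finset.range (n + 1), (a + (j:ℝ))
        = Real.Gamma (a + ((n + 1 : ℕ) : ℝ)) / Real.Gamma a := by
      rw [h1]; field_simp
    rw [Real.GammaSeq, h3, div_div_eq_mul_div]
  have h0 : Tendsto (fun n : ℕ => (n : ℝ) ^ a * (n.factorial : ℝ) * Real.Gamma a /
      Real.Gamma (a + ((n + 1 : ℕ) : ℝ))) atTop (𝓝 (Real.Gamma a)) :=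
    (Real.GammaSeq_tendsto_Gamma a).congr hseq
  have h2 : Tendsto (fun n : ℕ => (n : ℝ) ^ a * (n.factorial : ℝ) /
      Real.Gamma (a + ((n + 1 : ℕ) : ℝ))) atTop (𝓝 1) := by
    have hstep := h0.div_const (Real.Gamma a)
    rw [div_self hGa] at hstep
    refine hstep.congr fun n => ?_
    have hG2 : Real.Gamma (a + ((n + 1 : ℕ) : ℝ)) ≠ 0 :=
      (Real.Gamma_pos_of_pos (by positivity)).ne'
    field_simp
  have h3 : Tendsto (fun n : ℕ => Real.Gamma (a + ((n + 1 : ℕ) : ℝ)) /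
      ((n : ℝ) ^ a * (n.factorial : ℝ))) atTop (𝓝 1) := by
    have := h2.inv₀ one_ne_zero
    rw [inv_one] at this
    exact this.congr fun n => by rw [inv_div]
  rw [← Filter.tendsto_add_atTop_iff_nat 1]
  have h4 : Tendsto (fun n : ℕ => ((n : ℝ) / ((n : ℝ) + 1)) ^ a) atTop (𝓝 1) := by
    have hb : Tendsto (fun n : ℕ => (n : ℝ) / ((n : ℝ) + 1)) atTop (𝓝 1) :=
      tendsto_natCast_div_add_atTop (1 : ℝ)
    have := hb.rpow_const (Or.inr ha.le)
    rwa [Real.one_rpow] at this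
  have h5 := h3.mul h4
  rw [mul_one] at h5
  refine h5.congr' ?_
  filter_upwards [eventually_ge_atTop 1] with n hn
  have hx : (0:ℝ) < (n:ℝ) := by exact_mod_cast hn
  have hx1 : (0:ℝ) < (n:ℝ) + 1 := by positivity
  have e1 : ((n:ℝ) + 1) ^ a = ((n:ℝ) + 1) ^ (a - 1) * ((n:ℝ) + 1) := by
    rw [← Real.rpow_add_one hx1.ne' (a - 1), sub_add_cancel]
  have e2 : ((n:ℝ) / ((n:ℝ) + 1)) ^ a = (n:ℝ) ^ a / ((n:ℝ) + 1) ^ a :=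
    Real.div_rpow hx.le hx1.le a
  have hne1 : ((n:ℝ)) ^ a ≠ 0 := (Real.rpow_pos_of_pos hx a).ne'
  have hne2 : ((n:ℝ) + 1) ^ (a - 1) ≠ 0 := (Real.rpow_pos_of_pos hx1 _).ne'
  have hf : ((n.factorial : ℕ) : ℝ) ≠ 0 := by positivity
  have hfac : (((n+1).factorial : ℕ) : ℝ) = ((n:ℝ) + 1) * (n.factorial : ℝ) := by
    rw [Nat.factorial_succ]; push_cast; ring
  rw [e2, div_mul_div_comm]
  push_cast [hfac]
  rw [e1]
  field_simp

lemma tendsto_ratio (a : ℝ) :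
    Tendsto (fun n : ℕ => Real.Gamma (a + n) / ((n.factorial : ℝ) * (n : ℝ) ^ (a - 1)))
      atTop (𝓝 1) := by
  obtain ⟨k, hk⟩ := exists_nat_gt (-a)
  induction k generalizing a with
  | zero => exact tendsto_ratio_pos (by simpa using neg_lt_zero.mp (by exact_mod_cast hk))
  | succ k ih =>
    have hk' : -(a + 1) < k := by push_cast at hk ⊢; linarith
    have ih1 := ih (a + 1) hk'
    have hdiv : Tendsto (fun n : ℕ => (n : ℝ) / (a + n)) atTop (𝓝 1) := by
      have h1 : Tendsto (fun n : ℕ => (a + (n:ℝ)) / (n:ℝ)) atTop (𝓝 1) := by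
        have h2 : Tendsto (fun n : ℕ => a * ((n:ℝ))⁻¹ + 1) atTop (𝓝 1) := by
          have hinv : Tendsto (fun n : ℕ => ((n:ℝ))⁻¹) atTop (𝓝 0) :=
            tendsto_inv_atTop_zero.comp tendsto_natCast_atTop_atTop
          have := (hinv.const_mul a).add_const 1
          simpa using this
        refine h2.congr' ?_
        filter_upwards [eventually_ge_atTop 1] with n hn
        have hx : ((n:ℝ)) ≠ 0 := by positivity
        field_simp
      have := h1.inv₀ one_ne_zero
      rw [inv_one] at this
      exact this.congr fun n => by rw [inv_div]
    have h5 := ih1.mul hdiv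
    rw [mul_one] at h5
    refine h5.congr' ?_
    filter_upwards [eventually_ge_atTop 1, eventually_gt_atTop ⌈-a⌉₊] with n hn1 hn2
    have hx : (0:ℝ) < (n:ℝ) := by exact_mod_cast hn1
    have han : a + (n:ℝ) > 0 := by
      have : (-a) < n := lt_of_le_of_lt (Nat.le_ceil _) (by exact_mod_cast hn2)
      linarith
    have hgam : Real.Gamma (a + 1 + (n:ℝ)) = (a + n) * Real.Gamma (a + n) := by
      rw [show a + 1 + (n:ℝ) = (a + n) + 1 by ring, Real.Gamma_add_one han.ne']
    have e1 : (n:ℝ) ^ (a + 1 - 1) = (n:ℝ) ^ (a - 1) * (n:ℝ) := by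
      rw [← Real.rpow_add_one hx.ne' (a - 1)]
      norm_num
    have hne1 : ((n:ℝ)) ^ (a - 1) ≠ 0 := (Real.rpow_pos_of_pos hx _).ne'
    have hf : ((n.factorial : ℕ) : ℝ) ≠ 0 := by positivity
    rw [hgam, e1]
    field_simp

lemma tendsto_fG (a1 a2 a3 b1 b2 s2 : ℝ) (hs : s2 = b1 + b2 - a1 - a2 - a3) :
    Tendsto (fun n : ℕ => Real.Gamma (a1 + n) * Real.Gamma (a2 + n) * Real.Gamma (a3 + n) /
      (Real.Gamma (b1 + n) * Real.Gamma (b2 + n) * Real.Gamma (-s2 + n))) atTop (𝓝 1) := by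
  have h := (((tendsto_ratio a1).mul (tendsto_ratio a2)).mul (tendsto_ratio a3)).div
    ((((tendsto_ratio b1).mul (tendsto_ratio b2)).mul (tendsto_ratio (-s2))))
    (by norm_num)
  rw [show ((1:ℝ)*1*1/(1*1*1) : ℝ) = 1 by norm_num] at h
  refine h.congr' ?_
  filter_upwards [eventually_ge_atTop 1,
    eventually_gt_atTop ⌈|a1| + |a2| + |a3| + |b1| + |b2| + |s2| + 1⌉₊] with n hn1 hn2
  have hx : (0:ℝ) < (n:ℝ) := by exact_mod_cast hn1
  have hgt : |a1| + |a2| + |a3| + |b1| + |b2| + |s2| + 1 < (n:ℝ) :=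
    lt_of_le_of_lt (Nat.le_ceil _) (by exact_mod_cast hn2)
  have e0 : ∀ c : ℝ, |c| ≤ |a1| + |a2| + |a3| + |b1| + |b2| + |s2| → 0 < c + (n:ℝ) := by
    intro c hc
    have := neg_abs_le c
    linarith
  have v1 := abs_nonneg a1; have v2 := abs_nonneg a2; have v3 := abs_nonneg a3
  have v4 := abs_nonneg b1; have v5 := abs_nonneg b2; have v6 := abs_nonneg s2
  have ha1 : 0 < a1 + (n:ℝ) := e0 a1 (by linarith)
  have ha2 : 0 < a2 + (n:ℝ) := e0 a2 (by linarith)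
  have ha3 : 0 < a3 + (n:ℝ) := e0 a3 (by linarith)
  have hb1 : 0 < b1 + (n:ℝ) := e0 b1 (by linarith)
  have hb2 : 0 < b2 + (n:ℝ) := e0 b2 (by linarith)
  have hb3 : 0 < -s2 + (n:ℝ) := e0 (-s2) (by rw [abs_neg]; linarith)
  have hF : ((n.factorial : ℕ) : ℝ) ≠ 0 := by positivity
  have hp : ∀ t : ℝ, ((n:ℝ)) ^ t ≠ 0 := fun t => (Real.rpow_pos_of_pos hx t).ne'
  have hpow : ((n:ℝ)) ^ (b1 - 1) * ((n:ℝ)) ^ (b2 - 1) * ((n:ℝ)) ^ (-s2 - 1)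
      = ((n:ℝ)) ^ (a1 - 1) * ((n:ℝ)) ^ (a2 - 1) * ((n:ℝ)) ^ (a3 - 1) := by
    rw [← Real.rpow_add hx, ← Real.rpow_add hx, ← Real.rpow_add hx, ← Real.rpow_add hx]
    congr 1
    linarith
  have gb1 : Real.Gamma (b1 + n) ≠ 0 := (Real.Gamma_pos_of_pos hb1).ne'
  have gb2 : Real.Gamma (b2 + n) ≠ 0 := (Real.Gamma_pos_of_pos hb2).ne'
  have gb3 : Real.Gamma (-s2 + n) ≠ 0 := (Real.Gamma_pos_of_pos hb3).ne'
  simp only [Pi.div_apply]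
  field_simp
  linear_combination hpow

noncomputable def Mp (a1 a2 a3 b1 b2 s2 : ℝ) (x : ℝ) : ℝ :=
  (b1+x)*(b2+x)*(-s2+x)*(1+s2-x)*((s2-x) + ((a1+s2)*(a2+s2)-(b2-a3)*(b1-a3)))
  - (a1+x)*(a2+x)*(a3+x)*(s2-x)*((1+s2-x) + ((a1+s2)*(a2+s2)-(b2-a3)*(b1-a3)))

lemma Mp_eq (a1 a2 a3 b1 b2 s2 : ℝ) (hs : s2 = b1+b2-a1-a2-a3) (x : ℝ) :
    Mp a1 a2 a3 b1 b2 s2 x =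
      ((Mp a1 a2 a3 b1 b2 s2 2 - 2*Mp a1 a2 a3 b1 b2 s2 1 + Mp a1 a2 a3 b1 b2 s2 0)/2) * x^2
      + ((4*Mp a1 a2 a3 b1 b2 s2 1 - Mp a1 a2 a3 b1 b2 s2 2 - 3*Mp a1 a2 a3 b1 b2 s2 0)/2) * x
      + Mp a1 a2 a3 b1 b2 s2 0 := by
  subst hs; simp only [Mp]; ring

noncomputable def fG (a1 a2 a3 b1 b2 s2 : ℝ) (n : ℕ) : ℝ :=
  Real.Gamma (a1 + n) * Real.Gamma (a2 + n) * Real.Gamma (a3 + n) /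
    (Real.Gamma (b1 + n) * Real.Gamma (b2 + n) * Real.Gamma (-s2 + n))

noncomputable def gG (a1 a2 a3 b1 b2 s2 : ℝ) (n : ℕ) : ℝ :=
  1 + ((a1 + s2) * (a2 + s2) - (b2 - a3) * (b1 - a3)) / (1 + s2 - n)

lemma cube_bound {x : ℝ} (hx : 1 ≤ x) : (x+1)*(x+2)*(x+3) ≤ 64*x^3 := by
  have h0 : 0 ≤ x := le_trans zero_le_one hx
  have h1 : x ≤ x*x := by nlinarith
  have h2 : x*x ≤ x*x*x := by nlinarith
  have h3 : 1 ≤ x*x*x := by nlinarith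
  nlinarith [h1, h2, h3]

noncomputable def wseq (n : ℕ) : ℝ := 1 / (((n:ℝ) + 1) * ((n:ℝ) + 2))

set_option maxHeartbeats 1000000 in
theorem mainAux (a1 a2 a3 b1 b2 s2 : ℝ) (hs : s2 = b1 + b2 - a1 - a2 - a3) :
    (fun n : ℕ => fG a1 a2 a3 b1 b2 s2 n - gG a1 a2 a3 b1 b2 s2 n) =O[atTop]
      fun n : ℕ => ((n : ℝ))⁻¹ ^ 2 := by
  set f := fG a1 a2 a3 b1 b2 s2 with hfdef
  set g := gG a1 a2 a3 b1 b2 s2 with hgdef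
  set R : ℝ := |a1| + |a2| + |a3| + |b1| + |b2| + |s2| + 3 with hRdef
  set K : ℝ := |(Mp a1 a2 a3 b1 b2 s2 2 - 2*Mp a1 a2 a3 b1 b2 s2 1 + Mp a1 a2 a3 b1 b2 s2 0)/2|
    + |(4*Mp a1 a2 a3 b1 b2 s2 1 - Mp a1 a2 a3 b1 b2 s2 2 - 3*Mp a1 a2 a3 b1 b2 s2 0)/2|
    + |Mp a1 a2 a3 b1 b2 s2 0| with hKdef
  have hK0 : 0 ≤ K := by positivity
  set K' : ℝ := 2048 * K + 1 with hK'def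
  have hK'0 : 0 < K' := by positivity
  have hR3 : 3 ≤ R := by
    have v1 := abs_nonneg a1; have v2 := abs_nonneg a2; have v3 := abs_nonneg a3
    have v4 := abs_nonneg b1; have v5 := abs_nonneg b2; have v6 := abs_nonneg s2
    rw [hRdef]; linarith
  -- bound on |Mp|
  have hMabs : ∀ x : ℝ, 1 ≤ x → |Mp a1 a2 a3 b1 b2 s2 x| ≤ K * x^2 := by
    intro x hx
    rw [Mp_eq a1 a2 a3 b1 b2 s2 hs x]
    have hx2 : (1:ℝ) ≤ x^2 := by nlinarith
    have t1 := abs_add_le ((Mp a1 a2 a3 b1 b2 s2 2 - 2*Mp a1 a2 a3 b1 b2 s2 1 + Mp a1 a2 a3 b1 b2 s2 0)/2 * x^2)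
      ((4*Mp a1 a2 a3 b1 b2 s2 1 - Mp a1 a2 a3 b1 b2 s2 2 - 3*Mp a1 a2 a3 b1 b2 s2 0)/2 * x)
    have t2 := abs_add_le ((Mp a1 a2 a3 b1 b2 s2 2 - 2*Mp a1 a2 a3 b1 b2 s2 1 + Mp a1 a2 a3 b1 b2 s2 0)/2 * x^2
      + (4*Mp a1 a2 a3 b1 b2 s2 1 - Mp a1 a2 a3 b1 b2 s2 2 - 3*Mp a1 a2 a3 b1 b2 s2 0)/2 * x)
      (Mp a1 a2 a3 b1 b2 s2 0)
    rw [abs_mul, abs_mul] at t1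
    rw [abs_of_nonneg (by positivity : (0:ℝ) ≤ x^2), abs_of_nonneg (by linarith : (0:ℝ) ≤ x)] at t1
    rw [hKdef]
    have hxx : x ≤ x^2 := by nlinarith
    linarith [t1, t2,
      mul_le_mul_of_nonneg_left hxx
        (abs_nonneg ((4*Mp a1 a2 a3 b1 b2 s2 1 - Mp a1 a2 a3 b1 b2 s2 2 - 3*Mp a1 a2 a3 b1 b2 s2 0)/2)),
      mul_le_mul_of_nonneg_left hx2 (abs_nonneg (Mp a1 a2 a3 b1 b2 s2 0))]
  -- limits
  have hflim : Tendsto f atTop (𝓝 1) := tendsto_fG a1 a2 a3 b1 b2 s2 hs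
  have hglim : Tendsto g atTop (𝓝 1) := by
    have hinv : Tendsto (fun n : ℕ => ((n:ℝ) + (-1 - s2))⁻¹) atTop (𝓝 0) :=
      (tendsto_atTop_add_const_right atTop (-1 - s2) tendsto_natCast_atTop_atTop).inv_tendsto_atTop
    have h2 := ((hinv.const_mul ((a1 + s2) * (a2 + s2) - (b2 - a3) * (b1 - a3))).neg).const_add 1
    norm_num at h2
    refine h2.congr fun n => ?_
    rw [hgdef]
    simp only [gG]
    rw [show (1 + s2 - (n:ℝ)) = -((n:ℝ) + (-1 - s2)) by ring, div_neg, div_eq_mul_inv]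
  have hulim : Tendsto (fun n : ℕ => g n / f n) atTop (𝓝 1) := by
    have := hglim.div hflim one_ne_zero
    simpa only [div_one, Pi.div_def] using this
  -- thresholds
  obtain ⟨N1, hN1⟩ : ∃ N1 : ℕ, ∀ n ≥ N1, f n ∈ Set.Ioo (1/2 : ℝ) 2 :=
    eventually_atTop.mp (hflim (Ioo_mem_nhds (by norm_num) (by norm_num)))
  obtain ⟨N0, hN0⟩ := exists_nat_gt (2 * R)
  set N := max N0 N1 + 1 with hNdef
  have hNN1 : N1 ≤ N := le_trans (le_max_right N0 N1) (Nat.le_succ _)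
  have hNN0 : N0 ≤ N := le_trans (le_max_left N0 N1) (Nat.le_succ _)
  -- key one-step bound
  have hkey : ∀ n : ℕ, N ≤ n →
      |g (n+1) / f (n+1) - g n / f n| ≤ K' * (wseq n - wseq (n+1)) := by
    intro n hn
    have hx2R : 2 * R < (n:ℝ) := by
      refine lt_of_lt_of_le hN0 ?_
      exact_mod_cast le_trans hNN0 hn
    have hx1 : (1:ℝ) ≤ (n:ℝ) := by linarith
    have hx0 : (0:ℝ) < (n:ℝ) := by linarith
    have habs : ∀ c : ℝ, |c| ≤ R - 1 → (n:ℝ)/2 < c + (n:ℝ) := by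
      intro c hc
      have := neg_abs_le c
      linarith
    have v1 := abs_nonneg a1; have v2 := abs_nonneg a2; have v3 := abs_nonneg a3
    have v4 := abs_nonneg b1; have v5 := abs_nonneg b2; have v6 := abs_nonneg s2
    have pa1 : (n:ℝ)/2 < a1 + (n:ℝ) := habs a1 (by rw [hRdef] at *; linarith)
    have pa2 : (n:ℝ)/2 < a2 + (n:ℝ) := habs a2 (by rw [hRdef] at *; linarith)
    have pa3 : (n:ℝ)/2 < a3 + (n:ℝ) := habs a3 (by rw [hRdef] at *; linarith)
    have pb1 : (n:ℝ)/2 < b1 + (n:ℝ) := habs b1 (by rw [hRdef] at *; linarith)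
    have pb2 : (n:ℝ)/2 < b2 + (n:ℝ) := habs b2 (by rw [hRdef] at *; linarith)
    have ps : (n:ℝ)/2 < -s2 + (n:ℝ) := habs (-s2) (by rw [abs_neg, hRdef] at *; linarith)
    have pd1 : (n:ℝ)/2 < -s2 - 1 + (n:ℝ) := by
      refine habs (-s2 - 1) ?_
      have h1 : |-s2 - 1| = |s2 + 1| := by rw [← abs_neg]; ring_nf
      have h2 : |s2 + 1| ≤ |s2| + 1 := by
        calc |s2 + 1| ≤ |s2| + |(1:ℝ)| := abs_add_le s2 1
        _ = |s2| + 1 := by rw [abs_one]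
      rw [h1, hRdef] at *; linarith
    have hxhalf : (0:ℝ) < (n:ℝ)/2 := by linarith
    have hfn : f n ∈ Set.Ioo (1/2 : ℝ) 2 := hN1 n (le_trans hNN1 hn)
    have hfn1 : f (n+1) ∈ Set.Ioo (1/2 : ℝ) 2 := hN1 (n+1) (by omega)
    have hfne : f n ≠ 0 := by have := hfn.1; positivity
    have hfn1pos : 0 < f (n+1) := lt_trans (by norm_num) hfn1.1
    have hfn1ne : f (n+1) ≠ 0 := hfn1pos.ne'
    -- Gamma recurrence
    have hfrec : f (n+1) = f n * ((a1+(n:ℝ))*(a2+(n:ℝ))*(a3+(n:ℝ)))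
        / ((b1+(n:ℝ))*(b2+(n:ℝ))*(-s2+(n:ℝ))) := by
      rw [hfdef]
      simp only [fG]
      push_cast
      have g1 : Real.Gamma (a1 + ((n:ℝ)+1)) = (a1 + n) * Real.Gamma (a1 + n) := by
        rw [show a1 + ((n:ℝ)+1) = (a1 + n) + 1 by ring,
          Real.Gamma_add_one (by linarith : a1 + (n:ℝ) > 0).ne']
      have g2 : Real.Gamma (a2 + ((n:ℝ)+1)) = (a2 + n) * Real.Gamma (a2 + n) := by
        rw [show a2 + ((n:ℝ)+1) = (a2 + n) + 1 by ring,
          Real.Gamma_add_one (by linarith : a2 + (n:ℝ) > 0).ne']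
      have g3 : Real.Gamma (a3 + ((n:ℝ)+1)) = (a3 + n) * Real.Gamma (a3 + n) := by
        rw [show a3 + ((n:ℝ)+1) = (a3 + n) + 1 by ring,
          Real.Gamma_add_one (by linarith : a3 + (n:ℝ) > 0).ne']
      have g4 : Real.Gamma (b1 + ((n:ℝ)+1)) = (b1 + n) * Real.Gamma (b1 + n) := by
        rw [show b1 + ((n:ℝ)+1) = (b1 + n) + 1 by ring,
          Real.Gamma_add_one (by linarith : b1 + (n:ℝ) > 0).ne']
      have g5 : Real.Gamma (b2 + ((n:ℝ)+1)) = (b2 + n) * Real.Gamma (b2 + n) := by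
        rw [show b2 + ((n:ℝ)+1) = (b2 + n) + 1 by ring,
          Real.Gamma_add_one (by linarith : b2 + (n:ℝ) > 0).ne']
      have g6 : Real.Gamma (-s2 + ((n:ℝ)+1)) = (-s2 + n) * Real.Gamma (-s2 + n) := by
        rw [show -s2 + ((n:ℝ)+1) = (-s2 + n) + 1 by ring,
          Real.Gamma_add_one (by linarith : -s2 + (n:ℝ) > 0).ne']
      rw [g1, g2, g3, g4, g5, g6]
      have gb1 : Real.Gamma (b1 + (n:ℝ)) ≠ 0 := (Real.Gamma_pos_of_pos (by linarith)).ne'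
      have gb2 : Real.Gamma (b2 + (n:ℝ)) ≠ 0 := (Real.Gamma_pos_of_pos (by linarith)).ne'
      have gb3 : Real.Gamma (-s2 + (n:ℝ)) ≠ 0 := (Real.Gamma_pos_of_pos (by linarith)).ne'
      have z1 : b1 + (n:ℝ) ≠ 0 := (lt_trans hxhalf pb1).ne'
      have z2 : b2 + (n:ℝ) ≠ 0 := (lt_trans hxhalf pb2).ne'
      have z3 : -s2 + (n:ℝ) ≠ 0 := (lt_trans hxhalf ps).ne'
      field_simp
    -- delta closed form
    have hd1 : 1 + s2 - (n:ℝ) < -((n:ℝ)/2) := by linarith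
    have hd2 : s2 - (n:ℝ) < -((n:ℝ)/2) := by linarith
    have hd1ne : 1 + s2 - (n:ℝ) ≠ 0 := by linarith
    have hd2ne : s2 - (n:ℝ) ≠ 0 := by linarith
    have hδeq : g (n+1) - ((a1+(n:ℝ))*(a2+(n:ℝ))*(a3+(n:ℝ)))
          / ((b1+(n:ℝ))*(b2+(n:ℝ))*(-s2+(n:ℝ))) * g n
        = Mp a1 a2 a3 b1 b2 s2 (n:ℝ)
          / ((b1+(n:ℝ))*(b2+(n:ℝ))*(-s2+(n:ℝ)) * ((1+s2-(n:ℝ))*(s2-(n:ℝ)))) := by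
      rw [hgdef]
      simp only [gG, Mp]
      push_cast
      have z1 : b1 + (n:ℝ) ≠ 0 := (lt_trans hxhalf pb1).ne'
      have z2 : b2 + (n:ℝ) ≠ 0 := (lt_trans hxhalf pb2).ne'
      have z3 : -s2 + (n:ℝ) ≠ 0 := (lt_trans hxhalf ps).ne'
      have z4 : 1 + s2 - ((n:ℝ) + 1) ≠ 0 := by
        intro h; apply hd2ne; linarith
      field_simp
      ring
    -- u step
    have hu_step : g (n+1) / f (n+1) - g n / f n
        = (g (n+1) - ((a1+(n:ℝ))*(a2+(n:ℝ))*(a3+(n:ℝ)))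
          / ((b1+(n:ℝ))*(b2+(n:ℝ))*(-s2+(n:ℝ))) * g n) / f (n+1) := by
      rw [hfrec]
      have z1 : b1 + (n:ℝ) ≠ 0 := (lt_trans hxhalf pb1).ne'
      have z2 : b2 + (n:ℝ) ≠ 0 := (lt_trans hxhalf pb2).ne'
      have z3 : -s2 + (n:ℝ) ≠ 0 := (lt_trans hxhalf ps).ne'
      have zq1 : a1 + (n:ℝ) ≠ 0 := (lt_trans hxhalf pa1).ne'
      have zq2 : a2 + (n:ℝ) ≠ 0 := (lt_trans hxhalf pa2).ne'
      have zq3 : a3 + (n:ℝ) ≠ 0 := (lt_trans hxhalf pa3).ne'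
      field_simp
    have e1 : g (n+1) / f (n+1) - g n / f n
        = Mp a1 a2 a3 b1 b2 s2 (n:ℝ)
          / ((b1+(n:ℝ))*(b2+(n:ℝ))*(-s2+(n:ℝ)) * ((1+s2-(n:ℝ))*(s2-(n:ℝ))) * f (n+1)) := by
      rw [hu_step, hδeq, div_div]
    -- denominator bound
    have hPpos : 0 < (b1+(n:ℝ))*(b2+(n:ℝ))*(-s2+(n:ℝ)) := by
      have := lt_trans hxhalf pb1
      have := lt_trans hxhalf pb2
      have := lt_trans hxhalf ps
      positivity
    have hEeq : (1+s2-(n:ℝ))*(s2-(n:ℝ)) = (-s2 - 1 + (n:ℝ))*(-s2 + (n:ℝ)) := by ring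
    have hEpos : 0 < (1+s2-(n:ℝ))*(s2-(n:ℝ)) := by
      rw [hEeq]
      have h1 := lt_trans hxhalf pd1
      have h2 := lt_trans hxhalf ps
      positivity
    have hdenpos : 0 < (b1+(n:ℝ))*(b2+(n:ℝ))*(-s2+(n:ℝ)) * ((1+s2-(n:ℝ))*(s2-(n:ℝ))) * f (n+1) :=
      mul_pos (mul_pos hPpos hEpos) hfn1pos
    have hP3 : ((n:ℝ)/2)*((n:ℝ)/2)*((n:ℝ)/2) ≤ (b1+(n:ℝ))*(b2+(n:ℝ))*(-s2+(n:ℝ)) := by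
      have h12 : ((n:ℝ)/2)*((n:ℝ)/2) ≤ (b1+(n:ℝ))*(b2+(n:ℝ)) :=
        mul_le_mul pb1.le pb2.le hxhalf.le (by linarith)
      refine mul_le_mul h12 ps.le hxhalf.le ?_
      nlinarith
    have hE2 : ((n:ℝ)/2)*((n:ℝ)/2) ≤ (1+s2-(n:ℝ))*(s2-(n:ℝ)) := by
      rw [hEeq]
      exact mul_le_mul pd1.le ps.le hxhalf.le (by linarith)
    have hden_ge : (n:ℝ)^5/64 ≤ (b1+(n:ℝ))*(b2+(n:ℝ))*(-s2+(n:ℝ))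
        * ((1+s2-(n:ℝ))*(s2-(n:ℝ))) * f (n+1) := by
      have hPE : (((n:ℝ)/2)*((n:ℝ)/2)*((n:ℝ)/2)) * (((n:ℝ)/2)*((n:ℝ)/2))
          ≤ (b1+(n:ℝ))*(b2+(n:ℝ))*(-s2+(n:ℝ)) * ((1+s2-(n:ℝ))*(s2-(n:ℝ))) := by
        refine mul_le_mul hP3 hE2 (by positivity) hPpos.le
      calc (n:ℝ)^5/64 = (((n:ℝ)/2)*((n:ℝ)/2)*((n:ℝ)/2)) * (((n:ℝ)/2)*((n:ℝ)/2)) * (1/2) := by ring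
      _ ≤ ((b1+(n:ℝ))*(b2+(n:ℝ))*(-s2+(n:ℝ)) * ((1+s2-(n:ℝ))*(s2-(n:ℝ)))) * f (n+1) := by
          refine mul_le_mul hPE hfn1.1.le (by norm_num) ?_
          exact le_trans (by positivity) hPE
    -- put together
    rw [e1, abs_div, abs_of_pos hdenpos]
    have hstep1 : |Mp a1 a2 a3 b1 b2 s2 (n:ℝ)|
        / ((b1+(n:ℝ))*(b2+(n:ℝ))*(-s2+(n:ℝ)) * ((1+s2-(n:ℝ))*(s2-(n:ℝ))) * f (n+1))
        ≤ (K * (n:ℝ)^2) / ((n:ℝ)^5/64) :=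
      div_le_div₀ (by positivity) (hMabs (n:ℝ) hx1) (by positivity) hden_ge
    refine le_trans hstep1 ?_
    have hwdiff : wseq n - wseq (n+1) = 2 / (((n:ℝ)+1)*((n:ℝ)+2)*((n:ℝ)+3)) := by
      simp only [wseq]
      push_cast
      have c1 : ((n:ℝ)+1) ≠ 0 := by positivity
      have c2 : ((n:ℝ)+2) ≠ 0 := by positivity
      have c3 : ((n:ℝ)+3) ≠ 0 := by positivity
      field_simp
      ring
    rw [hwdiff]
    have heq64 : (K * (n:ℝ)^2) / ((n:ℝ)^5/64) = 64*K/(n:ℝ)^3 := by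
      field_simp
    rw [heq64]
    have hrw : K' * (2 / (((n:ℝ)+1)*((n:ℝ)+2)*((n:ℝ)+3)))
        = 2*K' / (((n:ℝ)+1)*((n:ℝ)+2)*((n:ℝ)+3)) := by ring
    rw [hrw, div_le_div_iff₀ (by positivity) (by positivity)]
    have hD : ((n:ℝ)+1)*((n:ℝ)+2)*((n:ℝ)+3) ≤ 64*(n:ℝ)^3 := cube_bound hx1
    have h64K : (0:ℝ) ≤ 64*K := by linarith
    have hx3 : (0:ℝ) < (n:ℝ)^3 := pow_pos hx0 3
    calc 64*K * (((n:ℝ)+1)*((n:ℝ)+2)*((n:ℝ)+3)) ≤ 64*K*(64*(n:ℝ)^3) :=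
          mul_le_mul_of_nonneg_left hD h64K
    _ ≤ 2*K'*(n:ℝ)^3 := by rw [hK'def]; linarith [hx3]
  -- telescoping
  have hw_nonneg : ∀ m : ℕ, 0 ≤ wseq m := by
    intro m; simp only [wseq]; positivity
  have htel : ∀ n : ℕ, N ≤ n → ∀ m : ℕ, n ≤ m →
      |g m / f m - g n / f n| ≤ K' * (wseq n - wseq m) := by
    intro n hn m hm
    induction m, hm using Nat.le_induction with
    | base => simp
    | succ m hm ih =>
      have h1 := hkey m (le_trans hn hm)
      calc |g (m+1) / f (m+1) - g n / f n|
          ≤ |g (m+1) / f (m+1) - g m / f m| + |g m / f m - g n / f n| :=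
            abs_sub_le _ _ _
        _ ≤ K' * (wseq m - wseq (m+1)) + K' * (wseq n - wseq m) := add_le_add h1 ih
        _ = K' * (wseq n - wseq (m+1)) := by ring
  -- limit bound
  have hbound : ∀ n : ℕ, N ≤ n → |1 - g n / f n| ≤ K' * wseq n := by
    intro n hn
    have hlim2 : Tendsto (fun m : ℕ => |g m / f m - g n / f n|) atTop
        (𝓝 |1 - g n / f n|) := by
      have := (hulim.sub_const (g n / f n)).abs
      simpa using this
    refine le_of_tendsto hlim2 ?_
    filter_upwards [eventually_ge_atTop n] with m hm
    calc |g m / f m - g n / f n| ≤ K' * (wseq n - wseq m) := htel n hn m hm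
    _ ≤ K' * wseq n := by nlinarith [hw_nonneg m, hK'0]
  -- conclusion
  rw [isBigO_iff]
  refine ⟨2 * K', ?_⟩
  filter_upwards [eventually_ge_atTop N, eventually_ge_atTop 1] with n hn hn1
  have hx1 : (1:ℝ) ≤ (n:ℝ) := by exact_mod_cast hn1
  have hfn : f n ∈ Set.Ioo (1/2 : ℝ) 2 := hN1 n (le_trans hNN1 hn)
  have hfne : f n ≠ 0 := by have := hfn.1; positivity
  have heq : f n - g n = f n * (1 - g n / f n) := by field_simp
  rw [Real.norm_eq_abs, Real.norm_eq_abs, heq, abs_mul]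
  have h1 : |f n| ≤ 2 := by
    rw [abs_of_pos (by linarith [hfn.1] : (0:ℝ) < f n)]
    exact hfn.2.le
  have h2 := hbound n hn
  have h3 : |f n| * |1 - g n / f n| ≤ 2 * (K' * wseq n) :=
    mul_le_mul h1 h2 (abs_nonneg _) (by norm_num)
  refine le_trans h3 ?_
  have hxpos : (0:ℝ) < (n:ℝ) := lt_of_lt_of_le one_pos hx1
  have h4 : wseq n ≤ ((n:ℝ))⁻¹ ^ 2 := by
    have e : ((n:ℝ))⁻¹ ^ 2 = 1/((n:ℝ)^2) := by rw [← one_div, div_pow, one_pow]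
    rw [e]
    simp only [wseq]
    apply one_div_le_one_div_of_le (by positivity)
    nlinarith
  rw [abs_of_nonneg (by positivity : (0:ℝ) ≤ ((n:ℝ))⁻¹ ^ 2)]
  calc 2 * (K' * wseq n) ≤ 2 * (K' * (((n:ℝ))⁻¹ ^ 2)) := by
        refine mul_le_mul_of_nonneg_left (mul_le_mul_of_nonneg_left h4 hK'0.le) (by norm_num)
  _ = 2 * K' * ((n:ℝ))⁻¹ ^ 2 := by ring

theorem gamma_ratio_first_order_p2 (a1 a2 a3 b1 b2 s2 : ℝ)
    (hs : s2 = b1 + b2 - a1 - a2 - a3) :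
    (fun n : ℕ =>
        Real.Gamma (a1 + n) * Real.Gamma (a2 + n) * Real.Gamma (a3 + n) /
            (Real.Gamma (b1 + n) * Real.Gamma (b2 + n) * Real.Gamma (-s2 + n)) -
          (1 + ((a1 + s2) * (a2 + s2) - (b2 - a3) * (b1 - a3)) / (1 + s2 - n))) =O[atTop]
      fun n : ℕ => ((n : ℝ))⁻¹ ^ 2 := by
  exact mainAux a1 a2 a3 b1 b2 s2 hs
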